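/- Proposition A for #-decreasing holds if and only if Proposition B for #-decreasing holds. That is: (for all k, p > 0 and every #-decreasing function assignment U for ℕ^k, there exist a finite A ⊆ ℕ^k and E ⊆ ℕ with |E| = p and E^k ⊆ A such that U(A) has at most k^k regressive values on E^k) if and only if (for all k, p > 0 there exists n such that for every #-decreasing function assignment U for [n]^k, there exist A ⊆ [n]^k and E ⊆ [n] with |E| = p and E^k ⊆ A such that U(A) has at most k^k regressive values on E^k). -/

import Mathlib

/-- A function assignment for `α`: to each finite `A ⊆ α` it assigns a
function from `A` to `A` (values outside `A` are irrelevant). -/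
structure FunAssign (α : Type*) where
  U : Finset α → α → α
  maps : ∀ A : Finset α, ∀ x ∈ A, U A x ∈ A

/-- `f` has at most `c` regressive values on `E^k`. -/
def hasAtMostRegVals {k : ℕ} (f : (Fin k → ℕ) → (Fin k → ℕ))
    (E : Finset ℕ) (c : ℕ) : Prop :=
  {y : Fin k → ℕ | ∃ x : Fin k → ℕ, (∀ i, x i ∈ E) ∧ f x = y ∧
      (⨆ i, y i) < ⨅ i, x i}.Finite ∧
  {y : Fin k → ℕ | ∃ x : Fin k → ℕ, (∀ i, x i ∈ E) ∧ f x = y ∧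
      (⨆ i, y i) < ⨅ i, x i}.ncard ≤ c

/-- `V` is #-decreasing as a function assignment for `D` (with `D = ℕ^k`, the
usual notion; with `D = [n]^k`, the notion for `[n]^k`): for finite `A ⊆ D`
and `x ∈ D`, either the function extends, or it drops in sup norm at some `y`
of sup norm `> |x|`. -/
def SharpDecreasingOn {k : ℕ} (V : FunAssign (Fin k → ℕ))
    (D : Set (Fin k → ℕ)) : Prop :=
  ∀ A : Finset (Fin k → ℕ), ↑A ⊆ D → ∀ x ∈ D,
    (∀ y ∈ A, V.U A y = V.U (insert x A) y) ∨
    ∃ y ∈ A, (⨆ i, x i) < (⨆ i, y i) ∧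
      (⨆ i, V.U (insert x A) y i) < (⨆ i, V.U A y i)

/-- Proposition A for #-decreasing. -/
def PropASharp : Prop :=
  ∀ k p : ℕ, 0 < k → 0 < p → ∀ V : FunAssign (Fin k → ℕ),
    SharpDecreasingOn V Set.univ →
    ∃ (A : Finset (Fin k → ℕ)) (E : Finset ℕ), E.card = p ∧
      (∀ x : Fin k → ℕ, (∀ i, x i ∈ E) → x ∈ A) ∧
      hasAtMostRegVals (V.U A) E (k ^ k)

/-- Proposition B for #-decreasing. -/
def PropBSharp : Prop :=
  ∀ k p : ℕ, 0 < k → 0 < p → ∃ n : ℕ, ∀ V : FunAssign (Fin k → ℕ),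
    SharpDecreasingOn V {x | ∀ i, x i < n} →
    ∃ (A : Finset (Fin k → ℕ)) (E : Finset ℕ),
      (↑A : Set (Fin k → ℕ)) ⊆ {x | ∀ i, x i < n} ∧
      E ⊆ Finset.range n ∧ E.card = p ∧
      (∀ x : Fin k → ℕ, (∀ i, x i ∈ E) → x ∈ A) ∧
      hasAtMostRegVals (V.U A) E (k ^ k)


open Filter in
private lemma exists_lim {k : ℕ} (W : ℕ → FunAssign (Fin k → ℕ))
    (A : Finset (Fin k → ℕ)) (x : Fin k → ℕ) (hx : x ∈ A) :
    ∃ a, a ∈ A ∧ ∀ᶠ n in (hyperfilter ℕ : Filter ℕ), (W n).U A x = a := by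
  by_contra h
  push_neg at h
  have h2 : ∀ᶠ n in (hyperfilter ℕ : Filter ℕ), ∀ a ∈ A, (W n).U A x ≠ a := by
    rw [Filter.eventually_all_finset]
    intro a ha
    exact h a ha
  obtain ⟨n, hn⟩ := h2.exists
  exact hn _ ((W n).maps A x hx) rfl

private noncomputable def limA {k : ℕ} (W : ℕ → FunAssign (Fin k → ℕ)) :
    FunAssign (Fin k → ℕ) where
  U A x := if hx : x ∈ A then (exists_lim W A x hx).choose else x
  maps A x hx := by
    simp only [dif_pos hx]
    exact (exists_lim W A x hx).choose_spec.1

open Filter in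
private lemma limA_agree {k : ℕ} (W : ℕ → FunAssign (Fin k → ℕ))
    (A : Finset (Fin k → ℕ)) :
    ∀ᶠ n in (hyperfilter ℕ : Filter ℕ), ∀ x ∈ A, (W n).U A x = (limA W).U A x := by
  rw [Filter.eventually_all_finset]
  intro x hx
  have hv : (limA W).U A x = (exists_lim W A x hx).choose := by
    simp only [limA, dif_pos hx]
  rw [hv]
  exact (exists_lim W A x hx).choose_spec.2

open Filter in
private lemma eventually_box {k : ℕ} (A : Finset (Fin k → ℕ)) :
    ∀ᶠ n in (hyperfilter ℕ : Filter ℕ), ∀ y ∈ A, ∀ i, y i < n := by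
  refine Filter.Eventually.filter_mono Nat.hyperfilter_le_atTop
    (Filter.eventually_atTop.2
      ⟨(A.sup fun y => Finset.univ.sup y) + 1, fun n hn y hy i => ?_⟩)
  calc y i ≤ Finset.univ.sup y := Finset.le_sup (Finset.mem_univ i)
    _ < (A.sup fun y => Finset.univ.sup y) + 1 :=
        Nat.lt_succ_of_le (Finset.le_sup hy)
    _ ≤ n := hn

/-- Lemma 3.11 (i): Proposition A for #-decreasing is equivalent to
Proposition B for #-decreasing. -/
theorem stmt_10 : PropASharp ↔ PropBSharp := by
  constructor
  · intro hA k p hk hp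
    by_contra hB
    have hB' : ∀ n : ℕ, ∃ V : FunAssign (Fin k → ℕ),
        SharpDecreasingOn V {x | ∀ i, x i < n} ∧
        ¬ ∃ (A : Finset (Fin k → ℕ)) (E : Finset ℕ),
          (↑A : Set (Fin k → ℕ)) ⊆ {x | ∀ i, x i < n} ∧
          E ⊆ Finset.range n ∧ E.card = p ∧
          (∀ x : Fin k → ℕ, (∀ i, x i ∈ E) → x ∈ A) ∧
          hasAtMostRegVals (V.U A) E (k ^ k) := by
      intro n
      by_contra hcon
      push_neg at hcon
      exact hB ⟨n, hcon⟩
    choose W hWsd hWnc using hB'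
    -- limit assignment is #-decreasing on univ
    have hVsd : SharpDecreasingOn (limA W) Set.univ := by
      intro A _ x _
      have h3 := eventually_box (insert x A)
      obtain ⟨n, hn1, hn2, hn3⟩ :=
        ((limA_agree W A).and ((limA_agree W (insert x A)).and h3)).exists
      have hbox : (↑A : Set (Fin k → ℕ)) ⊆ {z | ∀ i, z i < n} :=
        fun y hy i => hn3 y (Finset.mem_insert_of_mem hy) i
      have hxbox : x ∈ {z : Fin k → ℕ | ∀ i, z i < n} :=
        fun i => hn3 x (Finset.mem_insert_self x A) i
      rcases hWsd n A hbox x hxbox with hext | ⟨y, hy, hsy, hdrop⟩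
      · left
        intro y hy
        rw [← hn1 y hy, ← hn2 y (Finset.mem_insert_of_mem hy)]
        exact hext y hy
      · right
        refine ⟨y, hy, hsy, ?_⟩
        rw [← hn1 y hy, ← hn2 y (Finset.mem_insert_of_mem hy)]
        exact hdrop
    obtain ⟨A, E, hE, hEk, hreg⟩ := hA k p hk hp (limA W) hVsd
    obtain ⟨n, hn1, hn3⟩ := ((limA_agree W A).and (eventually_box A)).exists
    have hbox : (↑A : Set (Fin k → ℕ)) ⊆ {z | ∀ i, z i < n} := fun y hy i => hn3 y hy i
    have hrange : E ⊆ Finset.range n := by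
      intro e he
      have hmem : (fun _ : Fin k => e) ∈ A := hEk _ (fun _ => he)
      exact Finset.mem_range.2 (hn3 _ hmem ⟨0, hk⟩)
    have hset : {y : Fin k → ℕ | ∃ x : Fin k → ℕ, (∀ i, x i ∈ E) ∧ (W n).U A x = y ∧
          (⨆ i, y i) < ⨅ i, x i}
        = {y : Fin k → ℕ | ∃ x : Fin k → ℕ, (∀ i, x i ∈ E) ∧ (limA W).U A x = y ∧
          (⨆ i, y i) < ⨅ i, x i} := by
      ext y
      constructor
      · rintro ⟨x, hxE, hfx, hlt⟩
        exact ⟨x, hxE, by rw [← hn1 x (hEk x hxE)]; exact hfx, hlt⟩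
      · rintro ⟨x, hxE, hfx, hlt⟩
        exact ⟨x, hxE, by rw [hn1 x (hEk x hxE)]; exact hfx, hlt⟩
    have hreg' : hasAtMostRegVals ((W n).U A) E (k ^ k) := by
      unfold hasAtMostRegVals
      rw [hset]
      exact hreg
    exact hWnc n ⟨A, E, hbox, hrange, hE, hEk, hreg'⟩
  · intro hB k p hk hp V hV
    obtain ⟨n, hn⟩ := hB k p hk hp
    obtain ⟨A, E, _, _, hE, hEk, hreg⟩ :=
      hn V (fun A _ x _ => hV A (Set.subset_univ _) x (Set.mem_univ x))
    exact ⟨A, E, hE, hEk, hreg⟩
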